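/- Define S : ℝ² → ℝ² by S(x,y) = ( (6x - 2√3 y + √3 - 3)/4 , (2√3 x + 6y - √3 - 3)/4 ). Let k ∈ ℝ and let f : ℝ² → ℝ be a C² function satisfying the Helmholtz equation with scalar k². Then g = f ∘ S is a C² function satisfying the Helmholtz equation with scalar 3k², i.e. ∂²g/∂x² + ∂²g/∂y² + 3k² g = 0 at every point of ℝ². -/

import Mathlib

open Real

/-- The partial derivative of `f : ℝ × ℝ → ℝ` in the first coordinate. -/
noncomputable def pdx (f : ℝ × ℝ → ℝ) (p : ℝ × ℝ) : ℝ :=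
  deriv (fun t => f (t, p.2)) p.1

/-- The partial derivative of `f : ℝ × ℝ → ℝ` in the second coordinate. -/
noncomputable def pdy (f : ℝ × ℝ → ℝ) (p : ℝ × ℝ) : ℝ :=
  deriv (fun t => f (p.1, t)) p.2

/-- `f` satisfies the Helmholtz equation with scalar `c`. -/
def IsHelmholtzScalar (c : ℝ) (f : ℝ × ℝ → ℝ) : Prop :=
  ∀ p : ℝ × ℝ, pdx (pdx f) p + pdy (pdy f) p + c * f p = 0

lemma pdx_eq (u : ℝ × ℝ → ℝ) (p : ℝ × ℝ) (hu : DifferentiableAt ℝ u p) :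
    pdx u p = fderiv ℝ u p (1, 0) := by
  have hm : HasDerivAt (fun t : ℝ => (t, p.2)) ((1:ℝ), (0:ℝ)) p.1 :=
    HasDerivAt.prodMk (hasDerivAt_id p.1) (hasDerivAt_const p.1 p.2)
  exact (hu.hasFDerivAt.comp_hasDerivAt p.1 (by simpa using hm)).deriv

lemma pdy_eq (u : ℝ × ℝ → ℝ) (p : ℝ × ℝ) (hu : DifferentiableAt ℝ u p) :
    pdy u p = fderiv ℝ u p (0, 1) := by
  have hm : HasDerivAt (fun t : ℝ => (p.1, t)) ((0:ℝ), (1:ℝ)) p.2 :=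
    HasDerivAt.prodMk (hasDerivAt_const p.2 p.1) (hasDerivAt_id p.2)
  exact (hu.hasFDerivAt.comp_hasDerivAt p.2 (by simpa using hm)).deriv

/-- Composing a solution of the Helmholtz equation with scalar `k²` with the
affine tessellation map `S` yields a solution with scalar `3k²`. -/
theorem helmholtz_triple_scalar
    (S : ℝ × ℝ → ℝ × ℝ)
    (hS : ∀ v : ℝ × ℝ, S v =
      ((6 * v.1 - 2 * Real.sqrt 3 * v.2 + Real.sqrt 3 - 3) / 4,
       (2 * Real.sqrt 3 * v.1 + 6 * v.2 - Real.sqrt 3 - 3) / 4))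
    (k : ℝ) (f : ℝ × ℝ → ℝ) (hf : ContDiff ℝ 2 f)
    (hH : IsHelmholtzScalar (k ^ 2) f) :
    ContDiff ℝ 2 (f ∘ S) ∧ IsHelmholtzScalar (3 * k ^ 2) (f ∘ S) := by
  set A : (ℝ × ℝ) →L[ℝ] (ℝ × ℝ) :=
    (((3:ℝ)/2) • ContinuousLinearMap.fst ℝ ℝ ℝ +
      (-(Real.sqrt 3)/2) • ContinuousLinearMap.snd ℝ ℝ ℝ).prod
    (((Real.sqrt 3)/2) • ContinuousLinearMap.fst ℝ ℝ ℝ +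
      ((3:ℝ)/2) • ContinuousLinearMap.snd ℝ ℝ ℝ) with hAdef
  have hAapp : ∀ v : ℝ × ℝ, A v =
      ((3/2)*v.1 + (-(Real.sqrt 3)/2)*v.2, ((Real.sqrt 3)/2)*v.1 + (3/2)*v.2) := by
    intro v
    simp [hAdef, smul_eq_mul]
  set c0 : ℝ × ℝ := ((Real.sqrt 3 - 3)/4, -(Real.sqrt 3 + 3)/4) with hc0
  have hSeq : S = fun v => A v + c0 := by
    funext v
    rw [hS, hAapp]
    simp [hc0, Prod.ext_iff]
    constructor <;> ring
  subst hSeq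
  have hScd : ContDiff ℝ 2 (fun v : ℝ × ℝ => A v + c0) := A.contDiff.add contDiff_const
  have hfd : Differentiable ℝ f := hf.differentiable (by norm_num)
  have hf1 : ContDiff ℝ 1 (fderiv ℝ f) := hf.fderiv_right (by norm_num)
  have hfd' : Differentiable ℝ (fderiv ℝ f) := hf1.differentiable one_ne_zero
  have hφd : ∀ vec : ℝ × ℝ, Differentiable ℝ (fun w => fderiv ℝ f w vec) := fun vec =>
    (ContinuousLinearMap.apply ℝ ℝ vec).differentiable.comp hfd'
  have hφf : ∀ (vec q dir : ℝ × ℝ),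
      fderiv ℝ (fun w => fderiv ℝ f w vec) q dir = fderiv ℝ (fderiv ℝ f) q dir vec := by
    intro vec q dir
    have h := ((ContinuousLinearMap.apply ℝ ℝ vec).hasFDerivAt
        (x := fderiv ℝ f q)).comp q (hfd' q).hasFDerivAt
    have h2 := h.fderiv
    calc fderiv ℝ (fun w => fderiv ℝ f w vec) q dir
        = ((ContinuousLinearMap.apply ℝ ℝ vec).comp (fderiv ℝ (fderiv ℝ f) q)) dir := by
          rw [← h2]; rfl
      _ = fderiv ℝ (fderiv ℝ f) q dir vec := rfl
  have hchain : ∀ (u : ℝ × ℝ → ℝ), Differentiable ℝ u → ∀ p : ℝ × ℝ,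
      fderiv ℝ (fun v => u (A v + c0)) p = (fderiv ℝ u (A p + c0)).comp A := by
    intro u hu p
    exact ((hu (A p + c0)).hasFDerivAt.comp p (A.hasFDerivAt.add_const c0)).fderiv
  -- second-order hypothesis in fderiv form
  have hH' : ∀ q : ℝ × ℝ, fderiv ℝ (fderiv ℝ f) q (1,0) (1,0)
      + fderiv ℝ (fderiv ℝ f) q (0,1) (0,1) + k ^ 2 * f q = 0 := by
    intro q
    have e1 : pdx f = fun w => fderiv ℝ f w (1, 0) := funext fun w => pdx_eq f w (hfd w)
    have e2 : pdy f = fun w => fderiv ℝ f w (0, 1) := funext fun w => pdy_eq f w (hfd w)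
    have h := hH q
    rw [e1, e2, pdx_eq _ q (hφd _ q), pdy_eq _ q (hφd _ q), hφf, hφf] at h
    exact h
  constructor
  · exact hf.comp hScd
  · intro p
    set q : ℝ × ℝ := A p + c0 with hq
    have hgd : Differentiable ℝ (f ∘ fun v => A v + c0) :=
      hfd.comp (A.differentiable.add_const c0)
    -- first derivatives of g
    have hvA : A ((1:ℝ), (0:ℝ)) = ((3/2 : ℝ), ((Real.sqrt 3)/2 : ℝ)) := by
      rw [hAapp]; simp
    have hvB : A ((0:ℝ), (1:ℝ)) = ((-(Real.sqrt 3)/2 : ℝ), (3/2 : ℝ)) := by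
      rw [hAapp]; simp
    have hgx : pdx (f ∘ fun v => A v + c0)
        = fun v => fderiv ℝ f (A v + c0) ((3/2 : ℝ), ((Real.sqrt 3)/2 : ℝ)) := by
      funext v
      rw [pdx_eq _ v (hgd v)]
      show fderiv ℝ (fun w => f (A w + c0)) v (1,0) = _
      rw [hchain f hfd v]
      simp [hvA]
    have hgy : pdy (f ∘ fun v => A v + c0)
        = fun v => fderiv ℝ f (A v + c0) ((-(Real.sqrt 3)/2 : ℝ), (3/2 : ℝ)) := by
      funext v
      rw [pdy_eq _ v (hgd v)]
      show fderiv ℝ (fun w => f (A w + c0)) v (0,1) = _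
      rw [hchain f hfd v]
      simp [hvB]
    set vA : ℝ × ℝ := ((3/2 : ℝ), ((Real.sqrt 3)/2 : ℝ)) with hvAdef
    set vB : ℝ × ℝ := ((-(Real.sqrt 3)/2 : ℝ), (3/2 : ℝ)) with hvBdef
    have hdA : Differentiable ℝ (fun v => fderiv ℝ f (A v + c0) vA) :=
      (hφd vA).comp (A.differentiable.add_const c0)
    have hdB : Differentiable ℝ (fun v => fderiv ℝ f (A v + c0) vB) :=
      (hφd vB).comp (A.differentiable.add_const c0)
    have hxx : pdx (pdx (f ∘ fun v => A v + c0)) p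
        = fderiv ℝ (fderiv ℝ f) q vA vA := by
      rw [hgx, pdx_eq _ p (hdA p)]
      show fderiv ℝ (fun v => (fun w => fderiv ℝ f w vA) (A v + c0)) p (1,0) = _
      rw [hchain _ (hφd vA) p]
      simp only [ContinuousLinearMap.comp_apply, hvA]
      rw [hφf]
    have hyy : pdy (pdy (f ∘ fun v => A v + c0)) p
        = fderiv ℝ (fderiv ℝ f) q vB vB := by
      rw [hgy, pdy_eq _ p (hdB p)]
      show fderiv ℝ (fun v => (fun w => fderiv ℝ f w vB) (A v + c0)) p (0,1) = _
      rw [hchain _ (hφd vB) p]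
      simp only [ContinuousLinearMap.comp_apply, hvB]
      rw [hφf]
    rw [hxx, hyy]
    have expand : ∀ x y : ℝ, fderiv ℝ (fderiv ℝ f) q (x, y) (x, y)
        = x^2 * fderiv ℝ (fderiv ℝ f) q (1,0) (1,0)
        + x*y*(fderiv ℝ (fderiv ℝ f) q (1,0) (0,1) + fderiv ℝ (fderiv ℝ f) q (0,1) (1,0))
        + y^2 * fderiv ℝ (fderiv ℝ f) q (0,1) (0,1) := by
      intro x y
      have h1 : ((x : ℝ), (y : ℝ)) = x • ((1:ℝ),(0:ℝ)) + y • ((0:ℝ),(1:ℝ)) := by simp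
      rw [h1]
      simp only [map_add, map_smul, ContinuousLinearMap.add_apply,
        ContinuousLinearMap.smul_apply, smul_eq_mul]
      ring
    have hs : Real.sqrt 3 ^ 2 = 3 := Real.sq_sqrt (by norm_num)
    have hHq := hH' q
    have EA := expand (3/2) (Real.sqrt 3/2)
    have EB := expand (-(Real.sqrt 3)/2) (3/2)
    show fderiv ℝ (fderiv ℝ f) q vA vA + fderiv ℝ (fderiv ℝ f) q vB vB
        + 3 * k ^ 2 * f q = 0
    rw [hvAdef, hvBdef]
    linear_combination EA + EB + 3*hHq
      + ((fderiv ℝ (fderiv ℝ f) q (1,0) (1,0) + fderiv ℝ (fderiv ℝ f) q (0,1) (0,1))/4) * hs
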